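/- Let (V,g) be a 2n-dimensional hyperbolic quadratic space over a field k of characteristic 0, C(V,g) its Clifford algebra identified with End(S) for a 2^n-dimensional space S, Tr the corresponding trace, T the canonical anti-automorphism of C(V,g) extending the identity on V, and g_Λ the natural extension of g to the exterior algebra Λ^*(V). Then for all α, β ∈ Λ^*(V), 2^n · g_Λ(α, β) = Tr(Q(α)^T Q(β)); that is, the quantization map Q is a multiple of an isometry. -/

import Mathlib

set_option linter.unusedSectionVars false

open CliffordAlgebra

section Aux

variable {k V : Type*} [Field k] [CharZero k] [AddCommGroup V] [Module k V]
  {Q : QuadraticForm k V} {N : ℕ} {b : Fin N → V}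

/-- product of clifford generators indexed by a list -/
def cw (Q : QuadraticForm k V) (b : Fin N → V) (l : List (Fin N)) : CliffordAlgebra Q :=
  (l.map fun i => ι Q (b i)).prod

@[simp] lemma cw_nil : cw Q b [] = 1 := rfl

lemma cw_cons (i : Fin N) (l : List (Fin N)) :
    cw Q b (i :: l) = ι Q (b i) * cw Q b l := by simp [cw]

lemma cw_append (l₁ l₂ : List (Fin N)) :
    cw Q b (l₁ ++ l₂) = cw Q b l₁ * cw Q b l₂ := by simp [cw]

lemma cw_singleton (i : Fin N) : cw Q b [i] = ι Q (b i) := by simp [cw]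

variable (horth : ∀ i j : Fin N, i ≠ j → Q.IsOrtho (b i) (b j))

include horth in
lemma pull1 {i : Fin N} {l : List (Fin N)} (h : i ∉ l) :
    ι Q (b i) * cw Q b l = ((-1:k) ^ l.length) • (cw Q b l * ι Q (b i)) := by
  induction l with
  | nil => simp
  | cons j t ih =>
    rw [List.mem_cons, not_or] at h
    obtain ⟨hij, ht⟩ := h
    rw [cw_cons, ← mul_assoc, ι_mul_ι_comm_of_isOrtho (horth i j hij), neg_mul, mul_assoc,
      ih ht, mul_smul_comm]
    simp [cw_cons, pow_succ, mul_smul, mul_assoc]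

include horth in
lemma pull1' {i : Fin N} {l : List (Fin N)} (h : i ∉ l) :
    cw Q b l * ι Q (b i) = ((-1:k) ^ l.length) • (ι Q (b i) * cw Q b l) := by
  rw [pull1 horth h, smul_smul, ← mul_pow]
  norm_num


include horth in
lemma cw_sq (hq : ∀ i, Q (b i) ≠ 0) {l : List (Fin N)} (h : l.Nodup) :
    ∃ s : k, s ≠ 0 ∧ cw Q b l * cw Q b l = algebraMap k _ s := by
  induction l with
  | nil => exact ⟨1, one_ne_zero, by simp⟩
  | cons j t ih =>
    rw [List.nodup_cons] at h
    obtain ⟨s, hs, hss⟩ := ih h.2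
    refine ⟨(-1:k) ^ t.length * (Q (b j) * s), by
      simp only [mul_ne_zero_iff]
      exact ⟨pow_ne_zero _ (by norm_num), hq j, hs⟩, ?_⟩
    have h1 : cw Q b t * ι Q (b j) = ((-1:k) ^ t.length) • (ι Q (b j) * cw Q b t) :=
      pull1' horth h.1
    have h2 : ι Q (b j) * (ι Q (b j) * cw Q b t) * cw Q b t = algebraMap k _ (Q (b j) * s) := by
      rw [← mul_assoc, ι_sq_scalar, mul_assoc, hss, ← map_mul]
    have h3 : cw Q b (j :: t) * cw Q b (j :: t)
        = ι Q (b j) * (cw Q b t * ι Q (b j)) * cw Q b t := by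
      rw [cw_cons]; noncomm_ring
    rw [h3, h1, mul_smul_comm, smul_mul_assoc, h2, Algebra.smul_def, ← map_mul]

include horth in
lemma omega_comm (hN : Even N) (j : Fin N) :
    ι Q (b j) * cw Q b (List.finRange N) = -(cw Q b (List.finRange N) * ι Q (b j)) := by
  obtain ⟨A, D, hAD⟩ := List.append_of_mem (List.mem_finRange j)
  have hnd : (List.finRange N).Nodup := List.nodup_finRange N
  rw [hAD] at hnd
  have hjA : j ∉ A := fun hj => (List.disjoint_of_nodup_append hnd hj) List.mem_cons_self
  have hjD : j ∉ D := by
    have := hnd.of_append_right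
    rw [List.nodup_cons] at this; exact this.1
  have hlen : A.length + D.length + 1 = N := by
    have := congrArg List.length hAD
    simp at this; omega
  have hL : ι Q (b j) * cw Q b (A ++ j :: D)
      = ((-1:k) ^ A.length * Q (b j)) • cw Q b (A ++ D) := by
    rw [cw_append, cw_cons, ← mul_assoc, pull1 horth hjA, smul_mul_assoc, mul_assoc,
      ← mul_assoc (ι Q (b j)), ι_sq_scalar, ← Algebra.smul_def, cw_append, mul_smul_comm,
      smul_smul]
  have hR : cw Q b (A ++ j :: D) * ι Q (b j)
      = ((-1:k) ^ D.length * Q (b j)) • cw Q b (A ++ D) := by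
    have h3 : cw Q b (A ++ j :: D) * ι Q (b j)
        = cw Q b A * (ι Q (b j) * (cw Q b D * ι Q (b j))) := by
      rw [cw_append, cw_cons]; noncomm_ring
    rw [h3, pull1' horth hjD, mul_smul_comm, mul_smul_comm,
      ← mul_assoc (ι Q (b j)), ι_sq_scalar, ← Algebra.smul_def, mul_smul_comm, smul_smul,
      cw_append]
  have hodd : Odd (A.length + D.length) := by
    rcases hN with ⟨r, hr⟩
    exact Nat.odd_iff.2 (by omega)
  have hsign : (-1:k) ^ A.length = -(-1:k) ^ D.length := by
    have h1 : (-1:k) ^ (A.length + D.length) = -1 := Odd.neg_one_pow hodd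
    rw [pow_add] at h1
    have h2 : (-1:k) ^ D.length * (-1:k) ^ D.length = 1 := by
      rw [← pow_add]; exact Even.neg_one_pow ⟨D.length, rfl⟩
    linear_combination ((-1:k) ^ D.length) * h1 - ((-1:k) ^ A.length) * h2
  rw [hAD, hL, hR, hsign]
  simp [neg_smul]


include horth in
lemma pull_through {i : Fin N} {a d : List (Fin N)} (hia : i ∉ a) :
    ι Q (b i) * cw Q b (a ++ i :: d) = ((-1:k) ^ a.length * Q (b i)) • cw Q b (a ++ d) := by
  rw [cw_append, cw_cons, ← mul_assoc, pull1 horth hia, smul_mul_assoc, mul_assoc,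
    ← mul_assoc (ι Q (b i)), ι_sq_scalar, ← Algebra.smul_def, cw_append, mul_smul_comm,
    smul_smul]

include horth in
lemma cw_mul_omega (hN : Even N) (l : List (Fin N)) :
    cw Q b l * cw Q b (List.finRange N)
      = ((-1:k) ^ l.length) • (cw Q b (List.finRange N) * cw Q b l) := by
  induction l with
  | nil => simp
  | cons j t ih =>
    rw [cw_cons, mul_assoc, ih, mul_smul_comm, ← mul_assoc, omega_comm horth hN j, neg_mul,
      mul_assoc]
    simp [pow_succ, mul_smul]

include horth in
lemma trace_odd (hN : Even N) (hq : ∀ i, Q (b i) ≠ 0)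
    (f : CliffordAlgebra Q →ₗ[k] k) (hcyc : ∀ x y, f (x * y) = f (y * x))
    {l : List (Fin N)} (h : Odd l.length) : f (cw Q b l) = 0 := by
  obtain ⟨s, hs, hss⟩ := cw_sq horth hq (List.nodup_finRange N)
  set ω := cw Q b (List.finRange N) with hω
  have h1 : cw Q b l * ω = -(ω * cw Q b l) := by
    rw [cw_mul_omega horth hN, Odd.neg_one_pow h, neg_smul, one_smul]
  have h2 : f (cw Q b l * ω * ω) = - f (cw Q b l * ω * ω) := by
    have h1' : ω * cw Q b l = -(cw Q b l * ω) := by rw [h1, neg_neg]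
    nth_rewrite 1 [hcyc (cw Q b l * ω) ω]
    rw [← mul_assoc, h1', neg_mul, map_neg]
  have h3 : f (cw Q b l * ω * ω) = 0 := by
    have := h2
    have h4 : (2:k) * f (cw Q b l * ω * ω) = 0 := by linear_combination this
    rcases mul_eq_zero.1 h4 with h5 | h5
    · exact absurd h5 two_ne_zero
    · exact h5
  have h6 : f (cw Q b l * ω * ω) = s * f (cw Q b l) := by
    have hc : cw Q b l * algebraMap k _ s = s • cw Q b l := by
      rw [Algebra.smul_def, Algebra.commutes]
    rw [mul_assoc, hss, hc, map_smul, smul_eq_mul]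
  rw [h6] at h3
  rcases mul_eq_zero.1 h3 with h5 | h5
  · exact absurd h5 hs
  · exact h5

include horth in
lemma trace_ne_nil (hN : Even N) (hq : ∀ i, Q (b i) ≠ 0)
    (f : CliffordAlgebra Q →ₗ[k] k) (hcyc : ∀ x y, f (x * y) = f (y * x))
    {l : List (Fin N)} (hnd : l.Nodup) (hne : l ≠ []) : f (cw Q b l) = 0 := by
  rcases Nat.even_or_odd l.length with he | ho
  · match l, hne with
    | j :: t, _ =>
      rw [List.nodup_cons] at hnd
      have hodd : Odd t.length := by
        rcases he with ⟨r, hr⟩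
        exact Nat.odd_iff.2 (by simp at hr ⊢; omega)
      have h1 : ι Q (b j) * cw Q b t = -(cw Q b t * ι Q (b j)) := by
        rw [pull1 horth hnd.1, Odd.neg_one_pow hodd, neg_smul, one_smul]
      have h2 : f (ι Q (b j) * cw Q b t) = - f (ι Q (b j) * cw Q b t) := by
        nth_rewrite 2 [hcyc]
        rw [← map_neg, ← h1]
      rw [cw_cons]
      have h4 : (2:k) * f (ι Q (b j) * cw Q b t) = 0 := by linear_combination h2
      rcases mul_eq_zero.1 h4 with h5 | h5
      · exact absurd h5 two_ne_zero
      · exact h5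
  · exact trace_odd horth hN hq f hcyc ho


lemma ext_ι_mul_prod_zero {v : V} : ∀ {L : List V}, v ∈ L →
    ExteriorAlgebra.ι k v * (L.map (ExteriorAlgebra.ι k)).prod = 0 := by
  intro L hv
  induction L with
  | nil => simp at hv
  | cons w t ih =>
    rcases List.mem_cons.1 hv with rfl | hv
    · rw [List.map_cons, List.prod_cons, ← mul_assoc, ExteriorAlgebra.ι_sq_zero, zero_mul]
    · have hanti : ExteriorAlgebra.ι k v * ExteriorAlgebra.ι k w
          = -(ExteriorAlgebra.ι k w * ExteriorAlgebra.ι k v) :=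
        ι_mul_ι_comm_of_isOrtho (by simp [QuadraticMap.IsOrtho])
      rw [List.map_cons, List.prod_cons, ← mul_assoc, hanti, neg_mul, mul_assoc, ih hv,
        mul_zero, neg_zero]

lemma ext_prod_dup_zero : ∀ {L : List V}, ¬ L.Nodup →
    (L.map (ExteriorAlgebra.ι k)).prod = 0 := by
  intro L h
  induction L with
  | nil => simp at h
  | cons w t ih =>
    rw [List.nodup_cons, not_and_or] at h
    rcases h with h | h
    · rw [not_not] at h
      rw [List.map_cons, List.prod_cons, ext_ι_mul_prod_zero h]
    · rw [List.map_cons, List.prod_cons, ih h, mul_zero]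

lemma ext_span_top {N : ℕ} (bb : Module.Basis (Fin N) k V) :
    Submodule.span k
      (Set.range fun l : List (Fin N) =>
        ((l.map fun i => ExteriorAlgebra.ι k (bb i)).prod : ExteriorAlgebra k V)) = ⊤ := by
  set Sm : Set (ExteriorAlgebra k V) := Set.range fun l : List (Fin N) =>
    ((l.map fun i => ExteriorAlgebra.ι k (bb i)).prod : ExteriorAlgebra k V) with hSm
  rw [eq_top_iff]
  rintro x -
  induction x using CliffordAlgebra.induction with
  | algebraMap r =>
    rw [Algebra.algebraMap_eq_smul_one]
    exact Submodule.smul_mem _ _ (Submodule.subset_span ⟨[], by simp⟩)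
  | ι v =>
    rw [show v = ∑ i, bb.repr v i • bb i from (bb.sum_repr v).symm, map_sum]
    refine Submodule.sum_mem _ fun i _ => ?_
    rw [map_smul]
    exact Submodule.smul_mem _ _ (Submodule.subset_span ⟨[i], by simp⟩)
  | mul x y hx hy =>
    have hxy : x * y ∈ Submodule.span k Sm * Submodule.span k Sm :=
      Submodule.mul_mem_mul hx hy
    rw [Submodule.span_mul_span] at hxy
    refine Submodule.span_le.2 ?_ hxy
    rintro z ⟨p, ⟨l₁, rfl⟩, q, ⟨l₂, rfl⟩, rfl⟩
    exact Submodule.subset_span ⟨l₁ ++ l₂, by simp⟩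
  | add x y hx hy => exact Submodule.add_mem _ hx hy

lemma getElem_append_middle {α : Type*} (a d : List α) (x : α) (m : ℕ)
    (h : a.length ≤ m) (hm : m < a.length + d.length) :
    (a ++ x :: d)[m + 1]'(by simp; omega) = (a ++ d)[m]'(by simp; omega) := by
  rw [List.getElem_append_right (by omega), List.getElem_append_right h]
  have h2 : m + 1 - a.length = (m - a.length) + 1 := by omega
  simp only [h2, List.getElem_cons_succ]

end Aux


theorem stmt1 {k V S : Type*} [Field k] [CharZero k]
    [AddCommGroup V] [Module k V] [FiniteDimensional k V]
    [AddCommGroup S] [Module k S] [FiniteDimensional k S] (n : ℕ)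
    (g : LinearMap.BilinForm k V) (Q : QuadraticForm k V)
    (hsymm : ∀ v w, g v w = g w v)
    (hnd : g.Nondegenerate)
    (hdimV : Module.finrank k V = 2 * n)
    (hhyp : ∃ W : Submodule k V, Module.finrank k ↥W = n ∧
      ∀ x ∈ W, ∀ y ∈ W, g x y = 0)
    (hQ : ∀ v, Q v = g v v)
    (hdimS : Module.finrank k S = 2 ^ n)
    -- the identification `C(V,g) ≅ End(S)`
    (e : CliffordAlgebra Q ≃ₐ[k] Module.End k S)
    -- the quantization map `Q : Λ*(V) → C(V,g)`, sending a product of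
    -- pairwise orthogonal vectors in the exterior algebra to their Clifford product
    (Φ : ExteriorAlgebra k V →ₗ[k] CliffordAlgebra Q)
    (hΦ : ∀ l : List V, l.Pairwise (fun v w => g v w = 0) →
      Φ ((l.map (ExteriorAlgebra.ι k)).prod) = (l.map (ι Q)).prod)
    -- the natural extension `g_Λ` of `g` to the exterior algebra
    (G : LinearMap.BilinForm k (ExteriorAlgebra k V))
    (hGdec : ∀ m : ℕ, ∀ u w : Fin m → V,
      G (((List.ofFn u).map (ExteriorAlgebra.ι k)).prod)
        (((List.ofFn w).map (ExteriorAlgebra.ι k)).prod) =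
        Matrix.det (Matrix.of fun i j => g (u i) (w j)))
    (hGorth : ∀ p q : ℕ, p ≠ q → ∀ u : Fin p → V, ∀ w : Fin q → V,
      G (((List.ofFn u).map (ExteriorAlgebra.ι k)).prod)
        (((List.ofFn w).map (ExteriorAlgebra.ι k)).prod) = 0) :
    ∀ α β : ExteriorAlgebra k V,
      (2 : k) ^ n * G α β =
        LinearMap.trace k S (e (reverse (Φ α) * Φ β)) := by
  classical
  letI : Invertible (2:k) := invertibleOfNonzero two_ne_zero
  have hgs : g.IsSymm := LinearMap.BilinForm.isSymm_def.2 fun x y => by simpa using (hsymm x y)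
  obtain ⟨b, hb⟩ := LinearMap.BilinForm.exists_orthogonal_basis (LinearMap.BilinForm.isSymm_iff.1 hgs)
  have hb₂ : ∀ i j : Fin (Module.finrank k V), i ≠ j → g (b i) (b j) = 0 := fun i j hij => by
    have := hb hij
    simpa [LinearMap.IsOrtho, Function.onFun] using this
  have hq : ∀ i, Q (b i) ≠ 0 := by
    intro i
    rw [hQ]
    have := LinearMap.BilinForm.iIsOrtho.not_isOrtho_basis_self_of_nondegenerate hb hnd i
    simpa [LinearMap.IsOrtho] using this
  have horth : ∀ i j : Fin (Module.finrank k V), i ≠ j → Q.IsOrtho (b i) (b j) := by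
    intro i j hij
    show Q (b i + b j) = Q (b i) + Q (b j)
    simp only [hQ, map_add, LinearMap.add_apply]
    rw [hb₂ i j hij, hb₂ j i hij.symm]
    ring
  have hNeven : Even (Module.finrank k V) := by rw [hdimV]; exact ⟨n, by omega⟩
  set f : CliffordAlgebra Q →ₗ[k] k := (LinearMap.trace k S).comp e.toLinearMap with hf
  have hcyc : ∀ x y, f (x * y) = f (y * x) := by
    intro x y
    simp only [hf, LinearMap.comp_apply, AlgEquiv.toLinearMap_apply, map_mul]
    exact LinearMap.trace_mul_comm k _ _
  have hone : f 1 = (2:k)^n := by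
    simp only [hf, LinearMap.comp_apply, AlgEquiv.toLinearMap_apply, map_one,
      LinearMap.trace_one, hdimS]
    push_cast
    ring
  set mE : List (Fin (Module.finrank k V)) → ExteriorAlgebra k V :=
    fun l => (l.map fun i => ExteriorAlgebra.ι k (b i)).prod with hmE
  have hΦm : ∀ l : List (Fin (Module.finrank k V)), l.Nodup → Φ (mE l) = cw Q b l := by
    intro l hl
    have hpair : (l.map b).Pairwise fun v w => g v w = 0 := by
      rw [List.pairwise_map]
      exact hl.imp (fun hij => hb₂ _ _ hij)
    have h2 := hΦ (l.map b) hpair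
    rw [List.map_map, List.map_map] at h2
    exact h2
  have hofn : ∀ (M : ℕ) (l : List (Fin (Module.finrank k V))) (h : M = l.length),
      ((List.ofFn fun x : Fin M => b (l.get (Fin.cast h x))).map (ExteriorAlgebra.ι k)).prod
        = mE l := by
    intro M l h; subst h
    rw [show (List.ofFn fun x : Fin l.length => b (l.get (Fin.cast rfl x))) = l.map b by
      rw [show (fun x : Fin l.length => b (l.get (Fin.cast rfl x))) = b ∘ l.get from rfl,
        ← List.map_ofFn, List.ofFn_get], List.map_map]
    rfl
  have hGlen : ∀ (l₁ l₂ : List (Fin (Module.finrank k V))) (h : l₁.length = l₂.length),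
      G (mE l₁) (mE l₂) = Matrix.det (Matrix.of fun x y : Fin l₁.length =>
        g (b (l₁.get (Fin.cast rfl x))) (b (l₂.get (Fin.cast h y)))) := by
    intro l₁ l₂ h
    rw [← hofn l₁.length l₁ rfl, ← hofn l₁.length l₂ h, hGdec]
  have hGne : ∀ l₁ l₂ : List (Fin (Module.finrank k V)), l₁.length ≠ l₂.length → G (mE l₁) (mE l₂) = 0 := by
    intro l₁ l₂ h
    rw [← hofn l₁.length l₁ rfl, ← hofn l₂.length l₂ rfl]
    exact hGorth _ _ h _ _
  have hGlen' : ∀ (m : ℕ) (l₁ l₂ : List (Fin (Module.finrank k V)))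
      (h₁ : m = l₁.length) (h₂ : m = l₂.length),
      G (mE l₁) (mE l₂) = Matrix.det (Matrix.of fun x y : Fin m =>
        g (b (l₁.get (Fin.cast h₁ x))) (b (l₂.get (Fin.cast h₂ y)))) := by
    intro m l₁ l₂ h₁ h₂
    rw [← hofn m l₁ h₁, ← hofn m l₂ h₂, hGdec]
  have hGrow : ∀ (i : Fin (Module.finrank k V)) (t l₂ : List (Fin (Module.finrank k V))),
      i ∉ l₂ → G (mE (i :: t)) (mE l₂) = 0 := by
    intro i t l₂ hi
    by_cases h : t.length + 1 = l₂.length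
    · rw [hGlen' (t.length + 1) (i :: t) l₂ rfl h]
      apply Matrix.det_eq_zero_of_row_eq_zero 0
      intro j
      simp only [Matrix.of_apply]
      have h0 : (i :: t).get (Fin.cast rfl (0 : Fin (t.length + 1))) = i := rfl
      rw [h0]
      exact hb₂ _ _ fun hc => hi (hc ▸ List.get_mem l₂ _)
    · exact hGne (i :: t) l₂ (by simpa using h)
  have hGexp : ∀ (i : Fin (Module.finrank k V)) (t a d : List (Fin (Module.finrank k V))),
      i ∉ a → (a ++ i :: d).Nodup → t.length = a.length + d.length →
      G (mE (i :: t)) (mE (a ++ i :: d))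
        = ((-1:k) ^ a.length * g (b i) (b i)) * G (mE t) (mE (a ++ d)) := by
    intro i t a d hia hnd2 hlen
    have h₂ : t.length + 1 = (a ++ i :: d).length := by simp; omega
    have hlen' : t.length = (a ++ d).length := by simp [hlen]
    have hpb : a.length < t.length + 1 := by omega
    have hgetp : ∀ (m : ℕ) (hm : m < (a ++ i :: d).length),
        (a ++ i :: d)[m] = i ↔ m = a.length := by
      intro m hm
      have hip : (a ++ i :: d)[a.length]'(by simp) = i := by
        rw [List.getElem_append_right (le_refl a.length)]
        simp
      constructor
      · intro hc
        exact hnd2.getElem_inj_iff.1 (hc.trans hip.symm)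
      · rintro rfl
        exact hip
    set A : Matrix (Fin (t.length + 1)) (Fin (t.length + 1)) k :=
      Matrix.of fun x y : Fin (t.length + 1) =>
        g (b ((i :: t).get (Fin.cast rfl x))) (b ((a ++ i :: d).get (Fin.cast h₂ y))) with hA
    rw [hGlen' (t.length + 1) (i :: t) (a ++ i :: d) rfl h₂, ← hA, Matrix.det_succ_row_zero]
    rw [Finset.sum_eq_single_of_mem (⟨a.length, hpb⟩ : Fin (t.length + 1))
      (Finset.mem_univ _) ?_]
    · have hA0p : A 0 ⟨a.length, hpb⟩ = g (b i) (b i) := by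
        simp only [hA, Matrix.of_apply]
        congr 2
        rw [List.get_eq_getElem]
        exact (hgetp a.length (by omega)).2 rfl
      have hminor : A.submatrix Fin.succ (Fin.succAbove ⟨a.length, hpb⟩)
          = Matrix.of fun x y : Fin t.length =>
            g (b (t.get (Fin.cast rfl x))) (b ((a ++ d).get (Fin.cast hlen' y))) := by
        ext x y
        simp only [Matrix.submatrix_apply, hA, Matrix.of_apply, List.get_eq_getElem,
          Fin.coe_cast, Fin.val_succ, List.getElem_cons_succ]
        rcases lt_or_ge (y : ℕ) a.length with hy | hy
        · have hsa : (((⟨a.length, hpb⟩ : Fin (t.length + 1)).succAbove y) : ℕ) = (y : ℕ) := by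
            rw [Fin.succAbove_of_castSucc_lt _ _ (by simpa [Fin.lt_def] using hy)]
            simp
          simp only [hsa]
          rw [List.getElem_append_left (by omega), List.getElem_append_left hy]
        · have hsa : (((⟨a.length, hpb⟩ : Fin (t.length + 1)).succAbove y) : ℕ)
              = (y : ℕ) + 1 := by
            rw [Fin.succAbove_of_le_castSucc _ _ (by simpa [Fin.le_def] using hy)]
            simp
          simp only [hsa]
          rw [getElem_append_middle a d i (y : ℕ) hy (by omega)]
      rw [hA0p, hminor, ← hGlen' t.length t (a ++ d) rfl hlen']
    · intro y _ hy
      have hz : A 0 y = 0 := by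
        simp only [hA, Matrix.of_apply]
        have h0 : (i :: t).get (Fin.cast rfl (0 : Fin (t.length + 1))) = i := rfl
        rw [h0]
        apply hb₂
        intro hc
        apply hy
        have hc' : (a ++ i :: d)[((Fin.cast h₂ y) : ℕ)] = i := by
          rw [← List.get_eq_getElem]
          exact hc.symm
        have := (hgetp _ (Fin.cast h₂ y).isLt).1 hc'
        exact Fin.ext (by simpa using this)
      rw [hz, mul_zero, zero_mul]
  have MAIN : ∀ l₁ : List (Fin (Module.finrank k V)), l₁.Nodup →
      ∀ l₂ : List (Fin (Module.finrank k V)), l₂.Nodup →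
      f (cw Q b l₁.reverse * cw Q b l₂) = (2:k)^n * G (mE l₁) (mE l₂) := by
    intro l₁
    induction l₁ with
    | nil =>
      intro _ l₂ h₂
      rcases eq_or_ne l₂ [] with rfl | hne
      · simp only [List.reverse_nil, cw_nil, one_mul]
        rw [hone, hGlen' 0 [] [] rfl rfl, Matrix.det_fin_zero, mul_one]
      · rw [List.reverse_nil, cw_nil, one_mul, trace_ne_nil horth hNeven hq f hcyc h₂ hne,
          hGne [] l₂ (by simpa using fun hc => hne (List.length_eq_zero_iff.1 hc.symm)), mul_zero]
    | cons i t ih =>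
      intro h₁ l₂ h₂
      rw [List.nodup_cons] at h₁
      have hrev : cw Q b (i :: t).reverse = cw Q b t.reverse * ι Q (b i) := by
        rw [List.reverse_cons, cw_append, cw_singleton]
      by_cases hi : i ∈ l₂
      · obtain ⟨a, d, rfl⟩ := List.append_of_mem hi
        have hia : i ∉ a := fun ha =>
          (List.disjoint_of_nodup_append h₂ ha) List.mem_cons_self
        have hnd_ad : (a ++ d).Nodup :=
          ((List.sublist_cons_self i d).append_left a).nodup h₂
        rw [hrev, mul_assoc, pull_through horth hia, mul_smul_comm, map_smul, smul_eq_mul,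
          ih h₁.2 (a ++ d) hnd_ad]
        by_cases hlen : t.length = a.length + d.length
        · rw [hGexp i t a d hia h₂ hlen, hQ]
          ring
        · rw [hGne t (a ++ d) (by simpa using hlen), hGne (i :: t) (a ++ i :: d)
            (by simp; omega)]
          ring
      · rw [hGrow i t l₂ hi, mul_zero, hrev, mul_assoc]
        rcases Nat.even_or_odd (t.length + l₂.length) with hpar | hpar
        · have hcl : cw Q b t.reverse * (ι Q (b i) * cw Q b l₂)
              = cw Q b (t.reverse ++ i :: l₂) := by
            rw [cw_append, cw_cons]
          rw [hcl]
          apply trace_odd horth hNeven hq f hcyc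
          rcases hpar with ⟨r, hr⟩
          simp only [List.length_append, List.length_reverse, List.length_cons]
          exact Nat.odd_iff.2 (by omega)
        · have hit : i ∉ t.reverse := by simpa using h₁.1
          have e1 : ι Q (b i) * cw Q b l₂ = ((-1:k) ^ l₂.length) • (cw Q b l₂ * ι Q (b i)) :=
            pull1 horth hi
          have e2 : ι Q (b i) * cw Q b t.reverse
              = ((-1:k) ^ t.length) • (cw Q b t.reverse * ι Q (b i)) := by
            simpa [List.length_reverse] using pull1 horth hit
          have hT : f (cw Q b t.reverse * (ι Q (b i) * cw Q b l₂))
              = -f (cw Q b t.reverse * (ι Q (b i) * cw Q b l₂)) := by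
            calc f (cw Q b t.reverse * (ι Q (b i) * cw Q b l₂))
                = (-1:k) ^ l₂.length * f (cw Q b t.reverse * (cw Q b l₂ * ι Q (b i))) := by
                  rw [e1, mul_smul_comm, map_smul, smul_eq_mul]
              _ = (-1:k) ^ l₂.length * f (ι Q (b i) * (cw Q b t.reverse * cw Q b l₂)) := by
                  rw [← mul_assoc, hcyc]
              _ = (-1:k) ^ l₂.length * f ((ι Q (b i) * cw Q b t.reverse) * cw Q b l₂) := by
                  rw [mul_assoc]
              _ = ((-1:k) ^ l₂.length * (-1:k) ^ t.length)
                    * f ((cw Q b t.reverse * ι Q (b i)) * cw Q b l₂) := by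
                  rw [e2, smul_mul_assoc, map_smul, smul_eq_mul]
                  ring
              _ = -f (cw Q b t.reverse * (ι Q (b i) * cw Q b l₂)) := by
                  rw [← pow_add, Odd.neg_one_pow (by
                    rcases hpar with ⟨r, hr⟩
                    exact Nat.odd_iff.2 (by omega)), mul_assoc]
                  ring
          have h4 : (2:k) * f (cw Q b t.reverse * (ι Q (b i) * cw Q b l₂)) = 0 := by
            linear_combination hT
          rcases mul_eq_zero.1 h4 with h5 | h5
          · exact absurd h5 two_ne_zero
          · exact h5
  -- assemble
  have hrevΦ : ∀ l : List (Fin (Module.finrank k V)), l.Nodup →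
      reverse (Φ (mE l)) = cw Q b l.reverse := by
    intro l hl
    rw [hΦm l hl]
    have h1 : cw Q b l = ((l.map b).map (ι Q)).prod := by
      simp only [cw, List.map_map]
      rfl
    rw [h1, reverse_prod_map_ι, ← List.map_reverse, ← List.map_reverse]
    simp only [cw, List.map_map]
    rfl
  set R2 : LinearMap.BilinForm k (ExteriorAlgebra k V) :=
    LinearMap.compr₂ (LinearMap.compl₂
      ((LinearMap.mul k (CliffordAlgebra Q)).comp ((reverse (Q := Q)) ∘ₗ Φ)) Φ) f with hR2
  have key : ((2:k)^n) • G = R2 := by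
    apply LinearMap.ext_on (ext_span_top b)
    rintro x ⟨l₁, rfl⟩
    apply LinearMap.ext_on (ext_span_top b)
    rintro y ⟨l₂, rfl⟩
    show (2:k)^n • (G (mE l₁) (mE l₂)) = f (reverse (Φ (mE l₁)) * Φ (mE l₂))
    by_cases h₁ : l₁.Nodup
    · by_cases h₂ : l₂.Nodup
      · rw [hrevΦ l₁ h₁, hΦm l₂ h₂, MAIN l₁ h₁ l₂ h₂, smul_eq_mul]
      · have hz : mE l₂ = 0 := by
          have := ext_prod_dup_zero (k := k) (L := l₂.map b) (mt (List.Nodup.of_map ⇑b) h₂)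
          rw [List.map_map] at this
          exact this
        rw [hz]
        simp
    · have hz : mE l₁ = 0 := by
        have := ext_prod_dup_zero (k := k) (L := l₁.map b) (mt (List.Nodup.of_map ⇑b) h₁)
        rw [List.map_map] at this
        exact this
      rw [hz]
      simp
  intro α β
  have hk := LinearMap.congr_fun (LinearMap.congr_fun key α) β
  simp only [LinearMap.smul_apply, smul_eq_mul] at hk
  rw [hk]
  rfl
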